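/- Let V = Aug(ℂ^n) ⊆ ℂ^n with basis w_i = v_i − v_n for 1 ≤ i ≤ n−1, and set w_n = v_1 + ⋯ + v_n. The linear map ρ: Λ^r(ℂ^n) → Λ^{r−1}(V) defined on the wedge basis of w_1,…,w_n by ρ(w_{i_1} ∧ ⋯ ∧ w_{i_r}) = w_{i_1} ∧ ⋯ ∧ w_{i_{r−1}} if i_r = n and 0 otherwise, is a surjective homomorphism of ℂ[T_n]-modules with kernel Λ^r(V). -/

import Mathlib

open Finset in
/-- The natural representation of the full transformation monoid `Function.End (Fin n)`
on `ℂ^n`, determined by `f · v_i = v_{f i}` on the standard basis. -/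
noncomputable def natRep (n : ℕ) :
    Representation ℂ (Function.End (Fin n)) (Fin n → ℂ) where
  toFun f :=
    { toFun := fun x j => ∑ i, if f i = j then x i else 0
      map_add' := by
        intro x y
        funext j
        simp only [Pi.add_apply]
        rw [← Finset.sum_add_distrib]
        congr 1; funext i; split <;> simp
      map_smul' := by
        intro c x
        funext j
        simp [Finset.mul_sum, apply_ite (fun t => c * t)] }
  map_one' := by
    refine LinearMap.ext fun x => funext fun j => ?_
    show (∑ i, if (1 : Function.End (Fin n)) i = j then x i else 0) = x j
    have h : ∀ i : Fin n, (1 : Function.End (Fin n)) i = i := fun _ => rfl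
    simp only [h]
    rw [Finset.sum_ite_eq' Finset.univ j x]
    simp
  map_mul' := by
    intro f g
    refine LinearMap.ext fun x => funext fun j => ?_
    show (∑ i, if f (g i) = j then x i else 0)
        = ∑ k, if f k = j then ∑ i, if g i = k then x i else 0 else 0
    have key : ∀ k, (if f k = j then ∑ i, if g i = k then x i else 0 else 0)
        = ∑ i, if g i = k then (if f k = j then x i else 0) else 0 := by
      intro k; split
      · rfl
      · simp
    rw [Finset.sum_congr rfl (fun k _ => key k), Finset.sum_comm]
    refine Finset.sum_congr rfl fun i _ => ?_
    rw [Finset.sum_ite_eq Finset.univ (g i) (fun k => if f k = j then x i else 0)]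
    simp

lemma sum_natRep (n : ℕ) (f : Function.End (Fin n)) (x : Fin n → ℂ) :
    ∑ j, natRep n f x j = ∑ i, x i := by
  show ∑ j, ∑ i, (if f i = j then x i else 0) = _
  rw [Finset.sum_comm]
  simp [Finset.sum_ite_eq' Finset.univ]

/-- The augmentation submodule `Aug(ℂ^n)` of the natural module: vectors whose
coordinates sum to zero. -/
noncomputable def Aug (n : ℕ) : Submodule ℂ (Fin n → ℂ) where
  carrier := {x | ∑ i, x i = 0}
  add_mem' := by intro a b ha hb; simp_all [Finset.sum_add_distrib]
  zero_mem' := by simp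
  smul_mem' := by intro c a ha; simp_all [← Finset.mul_sum]

lemma natRep_mem_aug (n : ℕ) (f : Function.End (Fin n)) {x : Fin n → ℂ}
    (hx : x ∈ Aug n) : natRep n f x ∈ Aug n := by
  have : ∑ j, natRep n f x j = 0 := by rw [sum_natRep]; exact hx
  exact this

/-- The representation of the full transformation monoid on the augmentation submodule. -/
noncomputable def augRep (n : ℕ) : Representation ℂ (Function.End (Fin n)) (Aug n) where
  toFun f := (natRep n f).restrict (p := Aug n) (q := Aug n) (fun _ hx => natRep_mem_aug n f hx)
  map_one' := by
    refine LinearMap.ext fun x => Subtype.ext ?_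
    simp [LinearMap.restrict_apply]
  map_mul' := by
    intro f g
    refine LinearMap.ext fun x => Subtype.ext ?_
    simp [LinearMap.restrict_apply]

lemma extAlg_map_mem {R M N : Type} [CommRing R] [AddCommGroup M] [Module R M]
    [AddCommGroup N] [Module R N] (r : ℕ) (f : M →ₗ[R] N) {x : ExteriorAlgebra R M}
    (hx : x ∈ ⋀[R]^r M) : ExteriorAlgebra.map f x ∈ ⋀[R]^r N := by
  rw [← ExteriorAlgebra.ιMulti_span_fixedDegree] at hx ⊢
  induction hx using Submodule.span_induction with
  | mem y hy =>
      obtain ⟨v, rfl⟩ := hy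
      rw [ExteriorAlgebra.map_apply_ιMulti]
      exact Submodule.subset_span ⟨f ∘ v, rfl⟩
  | zero => simp
  | add y z _ _ hy hz => rw [map_add]; exact Submodule.add_mem _ hy hz
  | smul c y _ hy => rw [map_smul]; exact Submodule.smul_mem _ c hy

/-- The linear map between `r`-th exterior powers induced by a linear map. -/
noncomputable def extMap {R M N : Type} [CommRing R] [AddCommGroup M] [Module R M]
    [AddCommGroup N] [Module R N] (r : ℕ) (f : M →ₗ[R] N) :
    ⋀[R]^r M →ₗ[R] ⋀[R]^r N :=
  (ExteriorAlgebra.map f).toLinearMap.restrict (p := ⋀[R]^r M) (q := ⋀[R]^r N)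
    (fun _ hx => extAlg_map_mem r f hx)

/-- The representation of the full transformation monoid on the `r`-th exterior power
of the natural module, by the diagonal action on wedge products. -/
noncomputable def extRep (n r : ℕ) :
    Representation ℂ (Function.End (Fin n)) (⋀[ℂ]^r (Fin n → ℂ)) where
  toFun f := extMap r (natRep n f)
  map_one' := by
    refine LinearMap.ext fun x => Subtype.ext ?_
    simp [extMap, LinearMap.restrict_apply, map_one, Module.End.one_eq_id,
      ExteriorAlgebra.map_id]
  map_mul' := by
    intro f g
    refine LinearMap.ext fun x => Subtype.ext ?_
    simp only [extMap, LinearMap.restrict_apply, map_mul, Module.End.mul_eq_comp,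
      ← ExteriorAlgebra.map_comp_map]
    rfl

set_option synthInstance.maxHeartbeats 1000000 in
/-- The representation of the full transformation monoid on the `r`-th exterior power
of the augmentation submodule. -/
noncomputable def extAugRep (n r : ℕ) :
    Representation ℂ (Function.End (Fin n)) (⋀[ℂ]^r ↥(Aug n)) where
  toFun f := extMap r (augRep n f)
  map_one' := by
    refine LinearMap.ext fun x => Subtype.ext ?_
    simp [extMap, LinearMap.restrict_apply, map_one, Module.End.one_eq_id,
      ExteriorAlgebra.map_id]
  map_mul' := by
    intro f g
    refine LinearMap.ext fun x => Subtype.ext ?_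
    simp only [extMap, LinearMap.restrict_apply, map_mul, Module.End.mul_eq_comp,
      ← ExteriorAlgebra.map_comp_map]
    rfl

/-- The idempotent `e_m ∈ T_n` fixing the first `m` points and sending all other
points to the first point. -/
def eIdem (n m : ℕ) : Function.End (Fin n) :=
  fun i => if h : (i : ℕ) < m then i else ⟨0, i.pos⟩

/-- The embedding of the symmetric group `S_r` into `T_n` as the maximal subgroup
at the idempotent `eIdem n r` (elements `g` with `e g e = g` invertible in `e T_n e`). -/
def permEmbed (n r : ℕ) (hr : 1 ≤ r) (hrn : r ≤ n) (σ : Equiv.Perm (Fin r)) :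
    Function.End (Fin n) :=
  fun i => Fin.castLE hrn (σ (if hi : (i : ℕ) < r then ⟨i, hi⟩ else ⟨0, hr⟩))

/-- The idempotent `η = (1/r!) ∑_{g ∈ G} sgn(g|_{[r]}) g` of the monoid algebra,
where `G ≅ S_r` is the maximal subgroup at `eIdem n r`. -/
noncomputable def eta (n r : ℕ) (hr : 1 ≤ r) (hrn : r ≤ n) :
    MonoidAlgebra ℂ (Function.End (Fin n)) :=
  (r.factorial : ℂ)⁻¹ • ∑ σ : Equiv.Perm (Fin r),
    MonoidAlgebra.single (permEmbed n r hr hrn σ) ((Equiv.Perm.sign σ : ℤ) : ℂ)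

/-- A permutation of `Fin m`, viewed as an element of the transformation monoid. -/
def permToEnd (m : ℕ) : Equiv.Perm (Fin m) →* Function.End (Fin m) where
  toFun σ := ⇑σ
  map_one' := rfl
  map_mul' := fun _ _ => rfl

/-- The wedge product of a family of `r` vectors, as an element of the `r`-th
exterior power. -/
noncomputable def wedge {M : Type} [AddCommGroup M] [Module ℂ M] (r : ℕ) (v : Fin r → M) :
    ⋀[ℂ]^r M :=
  ⟨ExteriorAlgebra.ιMulti ℂ r v, ExteriorAlgebra.ιMulti_range ℂ r ⟨v, rfl⟩⟩

/-- The basis `w_1, …, w_n` of `ℂ^n`: `w_i = v_i - v_n` for `i < n` and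
`w_n = v_1 + ⋯ + v_n`. -/
noncomputable def wBasis (n : ℕ) : Fin n → (Fin n → ℂ) :=
  fun i => if h : (i : ℕ) < n - 1
    then Pi.single i 1 - Pi.single (⟨n - 1, by omega⟩ : Fin n) 1
    else ∑ j, Pi.single j 1

lemma wBasis_mem_aug (n : ℕ) (i : Fin n) (h : (i : ℕ) < n - 1) : wBasis n i ∈ Aug n := by
  show ∑ j, wBasis n i j = 0
  simp [wBasis, h, Finset.sum_sub_distrib, Finset.sum_pi_single]

/-- The vectors `w_i = v_i - v_n` (for `i < n`) as elements of the augmentation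
submodule; junk value `0` otherwise. -/
noncomputable def wAug (n : ℕ) : Fin n → ↥(Aug n) :=
  fun i => if h : (i : ℕ) < n - 1 then ⟨wBasis n i, wBasis_mem_aug n i h⟩ else 0

/-- The trivial representation of the full transformation monoid on `ℂ`. -/
noncomputable def trivRep (n : ℕ) : Representation ℂ (Function.End (Fin n)) ℂ := 1

/-- `projDimLE R M k` : the `R`-module `M` admits a projective resolution of length
at most `k`, i.e. has projective dimension at most `k`. -/
def projDimLE (R : Type) [Ring R] (M : Type) [AddCommMonoid M] [Module R M] (k : ℕ) : Prop :=
  ∃ (P : ℕ → ModuleCat.{0} R) (d : (i : ℕ) → (P (i + 1) →ₗ[R] P i)) (π : P 0 →ₗ[R] M),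
    (∀ i, Module.Projective R (P i)) ∧
    Function.Surjective π ∧
    LinearMap.ker π = LinearMap.range (d 0) ∧
    (∀ i, LinearMap.ker (d i) = LinearMap.range (d (i + 1))) ∧
    (∀ i, k < i → Subsingleton (P i))

open ExteriorAlgebra

section Aux
variable {R M N : Type} [CommRing R] [AddCommGroup M] [Module R M] [AddCommGroup N] [Module R N]



/-- contraction commutes with induced algebra maps. -/
lemma ctr_map (g : M →ₗ[R] N) (d : Module.Dual R N) (x : ExteriorAlgebra R M) :
    CliffordAlgebra.contractRight (ExteriorAlgebra.map g x) d
      = ExteriorAlgebra.map g (CliffordAlgebra.contractRight x (d ∘ₗ g)) := by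
  induction x using CliffordAlgebra.right_induction with
  | algebraMap r =>
      rw [AlgHom.commutes, CliffordAlgebra.contractRight_algebraMap,
        CliffordAlgebra.contractRight_algebraMap, map_zero]
  | add x y hx hy => simp only [map_add, LinearMap.map_add, LinearMap.add_apply, hx, hy]
  | mul_ι m x hx =>
      rw [map_mul, ExteriorAlgebra.map_apply_ι, CliffordAlgebra.contractRight_mul_ι,
        CliffordAlgebra.contractRight_mul_ι, map_sub, map_smul, hx, map_mul,
        ExteriorAlgebra.map_apply_ι]
      rfl

lemma ctr_zero_fun (x : ExteriorAlgebra R M) :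
    CliffordAlgebra.contractRight x (0 : Module.Dual R M) = 0 :=
  map_zero (CliffordAlgebra.contractRight x)


lemma ι_swap (a b : N) :
    ExteriorAlgebra.ι R a * ExteriorAlgebra.ι R b = -(ExteriorAlgebra.ι R b * ExteriorAlgebra.ι R a) :=
  eq_neg_of_add_eq_zero_left (ExteriorAlgebra.ι_add_mul_swap a b)

/-- Key identity A. -/
lemma map_eq_map_add (g1 g2 : M →ₗ[R] N) (d : Module.Dual R M) (z : N)
    (h : ∀ a, g1 a = g2 a + d a • z) (x : ExteriorAlgebra R M) :
    ExteriorAlgebra.map g1 x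
      = ExteriorAlgebra.map g2 x
        + ExteriorAlgebra.map g2 (CliffordAlgebra.contractRight x d) * ExteriorAlgebra.ι R z := by
  induction x using CliffordAlgebra.right_induction with
  | algebraMap r =>
      rw [AlgHom.commutes, AlgHom.commutes, CliffordAlgebra.contractRight_algebraMap, map_zero,
        zero_mul, add_zero]
  | add x y hx hy =>
      simp only [map_add, LinearMap.add_apply]
      rw [add_mul, hx, hy]
      abel
  | mul_ι m x hx =>
      rw [map_mul, map_mul, ExteriorAlgebra.map_apply_ι, ExteriorAlgebra.map_apply_ι,
        CliffordAlgebra.contractRight_mul_ι, map_sub, map_smul, map_mul,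
        ExteriorAlgebra.map_apply_ι, hx, h m]
      set B := ExteriorAlgebra.map g2 x
      set u := ExteriorAlgebra.map g2 (CliffordAlgebra.contractRight x d)
      set w := ExteriorAlgebra.ι R (g2 m)
      set ζ := ExteriorAlgebra.ι R z
      have h1 : ζ * ζ = 0 := ExteriorAlgebra.ι_sq_zero z
      have h2 : ζ * w = -(w * ζ) := ι_swap z (g2 m)
      have h3 : ExteriorAlgebra.ι R (g2 m + d m • z) = w + d m • ζ := by
        rw [map_add, map_smul]
      rw [h3]
      simp only [mul_add, add_mul, sub_mul, mul_assoc, mul_smul_comm, smul_mul_assoc, h1, h2,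
        mul_zero, smul_zero, add_zero, mul_neg, smul_neg]
      abel

/-- Key identity B: the two maps agree after contraction. -/
lemma map_ctr_eq_map_ctr (g1 g2 : M →ₗ[R] N) (d : Module.Dual R M) (z : N)
    (h : ∀ a, g1 a = g2 a + d a • z) (x : ExteriorAlgebra R M) :
    ExteriorAlgebra.map g1 (CliffordAlgebra.contractRight x d)
      = ExteriorAlgebra.map g2 (CliffordAlgebra.contractRight x d) := by
  induction x using CliffordAlgebra.right_induction with
  | algebraMap r => rw [CliffordAlgebra.contractRight_algebraMap, map_zero, map_zero]
  | add x y hx hy => simp only [map_add, LinearMap.add_apply, hx, hy]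
  | mul_ι m x hx =>
      rw [CliffordAlgebra.contractRight_mul_ι, map_sub, map_sub, map_smul, map_smul, map_mul,
        map_mul, ExteriorAlgebra.map_apply_ι, ExteriorAlgebra.map_apply_ι, hx,
        map_eq_map_add g1 g2 d z h x, h m]
      have h1 : ExteriorAlgebra.ι R (g2 m + d m • z)
          = ExteriorAlgebra.ι R (g2 m) + d m • ExteriorAlgebra.ι R z := by rw [map_add, map_smul]
      rw [h1]
      set B := ExteriorAlgebra.map g2 x
      set u := ExteriorAlgebra.map g2 (CliffordAlgebra.contractRight x d)
      set w := ExteriorAlgebra.ι R (g2 m)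
      set ζ := ExteriorAlgebra.ι R z
      have h2 : ζ * ζ = 0 := ExteriorAlgebra.ι_sq_zero z
      simp only [smul_add, mul_add, mul_smul_comm, mul_assoc, h2, mul_zero, smul_zero, add_zero]
      abel

/-- Key identity E: reconstruction. -/
lemma map_proj_id (q : M →ₗ[R] M) (d : Module.Dual R M) (w : M)
    (hq : ∀ a, q a = a - d a • w) (x : ExteriorAlgebra R M) :
    ExteriorAlgebra.map q x
      + ExteriorAlgebra.map q (CliffordAlgebra.contractRight x d) * ExteriorAlgebra.ι R w = x := by
  induction x using CliffordAlgebra.right_induction with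
  | algebraMap r =>
      rw [AlgHom.commutes, CliffordAlgebra.contractRight_algebraMap, map_zero, zero_mul, add_zero]
  | add x y hx hy =>
      simp only [map_add, LinearMap.add_apply]
      rw [add_mul]
      calc _ = (ExteriorAlgebra.map q x
            + ExteriorAlgebra.map q (CliffordAlgebra.contractRight x d) * ExteriorAlgebra.ι R w)
          + (ExteriorAlgebra.map q y
            + ExteriorAlgebra.map q (CliffordAlgebra.contractRight y d) * ExteriorAlgebra.ι R w) := by
            abel
        _ = x + y := by rw [hx, hy]
  | mul_ι m x hx =>
      rw [map_mul, ExteriorAlgebra.map_apply_ι, CliffordAlgebra.contractRight_mul_ι, map_sub,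
        map_smul, map_mul, ExteriorAlgebra.map_apply_ι, hq m]
      have h1 : ExteriorAlgebra.ι R (m - d m • w)
          = ExteriorAlgebra.ι R m - d m • ExteriorAlgebra.ι R w := by rw [map_sub, map_smul]
      rw [h1]
      set B := ExteriorAlgebra.map q x
      set u := ExteriorAlgebra.map q (CliffordAlgebra.contractRight x d)
      set ν := ExteriorAlgebra.ι R m
      set ω := ExteriorAlgebra.ι R w
      have h2 : ω * ω = 0 := ExteriorAlgebra.ι_sq_zero w
      have h3 : ω * ν = -(ν * ω) := ι_swap w m
      have : B * (ν - d m • ω) + (d m • B - u * (ν - d m • ω)) * ω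
          = (B + u * ω) * ν := by
        simp only [mul_sub, sub_mul, add_mul, mul_assoc, mul_smul_comm, smul_mul_assoc, h2, h3,
          mul_zero, smul_zero, mul_neg, smul_sub, smul_add, smul_smul]
        abel
      rw [this, hx]

lemma ι_mem_one (a : M) : ExteriorAlgebra.ι R a ∈ ⋀[R]^1 M := by
  show _ ∈ LinearMap.range (ExteriorAlgebra.ι R) ^ 1
  rw [pow_one]
  exact LinearMap.mem_range_self _ a

/-- Contraction decreases degree by one. -/
lemma ctr_mem_pow (d : Module.Dual R M) {r : ℕ} {x : ExteriorAlgebra R M}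
    (hx : x ∈ ⋀[R]^r M) :
    CliffordAlgebra.contractRight x d ∈ ⋀[R]^(r-1) M
      ∧ (r = 0 → CliffordAlgebra.contractRight x d = 0) := by
  induction hx using Submodule.pow_induction_on_right' with
  | algebraMap c =>
      rw [CliffordAlgebra.contractRight_algebraMap]
      exact ⟨Submodule.zero_mem _, fun _ => rfl⟩
  | add x y i hx hy ihx ihy =>
      refine ⟨by simpa only [LinearMap.map_add, LinearMap.add_apply] using
        Submodule.add_mem _ ihx.1 ihy.1, fun h0 => ?_⟩
      simp only [LinearMap.map_add, LinearMap.add_apply, ihx.2 h0, ihy.2 h0, add_zero]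
  | mul_mem i x hxmem ih m hm =>
      obtain ⟨a, rfl⟩ := hm
      rw [CliffordAlgebra.contractRight_mul_ι]
      constructor
      · rcases Nat.eq_zero_or_pos i with h0 | hpos
        · subst h0
          rw [ih.2 rfl, zero_mul, sub_zero]
          exact Submodule.smul_mem _ _ hxmem
        · refine Submodule.sub_mem _ (Submodule.smul_mem _ _ ?_) ?_
          · have : i + 1 - 1 = i := rfl
            rw [this]; exact hxmem
          · have hmul := SetLike.mul_mem_graded (A := fun i => ⋀[R]^i M) ih.1 (ι_mem_one a)
            have he : i - 1 + 1 = i := by omega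
            rw [he] at hmul
            exact hmul
      · intro h
        exact absurd h i.succ_ne_zero

/-- Contraction kills products of generators annihilated by `d`. -/
lemma ctr_list_zero (d : Module.Dual R M) (l : List M) (h : ∀ a ∈ l, d a = 0) :
    CliffordAlgebra.contractRight (l.map (ExteriorAlgebra.ι R)).prod d = 0 := by
  induction l using List.reverseRecOn with
  | nil => simpa using CliffordAlgebra.contractRight_one (0 : QuadraticForm R M) d
  | append_singleton l a ih =>
      rw [List.map_append, List.prod_append, List.map_singleton, List.prod_singleton,
        CliffordAlgebra.contractRight_mul_ι, h a (by simp), zero_smul,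
        ih (fun b hb => h b (by simp [hb])), zero_mul, sub_zero]

lemma ctr_ιMulti_zero (d : Module.Dual R M) {m : ℕ} (v : Fin m → M) (h : ∀ j, d (v j) = 0) :
    CliffordAlgebra.contractRight (ExteriorAlgebra.ιMulti R m v) d = 0 := by
  rw [ExteriorAlgebra.ιMulti_apply, show (List.ofFn fun i => ExteriorAlgebra.ι R (v i))
      = (List.ofFn v).map (ExteriorAlgebra.ι R) by rw [List.map_ofFn]; rfl]
  refine ctr_list_zero d _ fun a ha => ?_
  obtain ⟨j, rfl⟩ := List.mem_ofFn.1 ha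
  exact h j

lemma ιMulti_snoc {m : ℕ} (v : Fin (m+1) → M) :
    ExteriorAlgebra.ιMulti R (m+1) v
      = ExteriorAlgebra.ιMulti R m (fun j => v j.castSucc) * ExteriorAlgebra.ι R (v (Fin.last m)) := by
  rw [ExteriorAlgebra.ιMulti_apply, ExteriorAlgebra.ιMulti_apply, List.ofFn_succ',
    List.concat_eq_append, List.prod_append, List.prod_singleton]



/-- The averaged coordinate-sum functional. -/
noncomputable def lamF (n : ℕ) : Module.Dual ℂ (Fin n → ℂ) where
  toFun x := (n : ℂ)⁻¹ * ∑ i, x i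
  map_add' x y := by
    simp only [Pi.add_apply, Finset.sum_add_distrib]
    ring
  map_smul' c x := by
    simp only [Pi.smul_apply, smul_eq_mul, RingHom.id_apply, ← Finset.mul_sum]
    ring

/-- The all-ones vector. -/
noncomputable def oneV (n : ℕ) : Fin n → ℂ := fun _ => 1

lemma lamF_apply (n : ℕ) (x : Fin n → ℂ) : lamF n x = (n : ℂ)⁻¹ * ∑ i, x i := rfl

lemma sum_oneV (n : ℕ) : ∑ i, oneV n i = (n : ℂ) := by
  simp [oneV]

lemma lamF_oneV (n : ℕ) (hn : n ≠ 0) : lamF n (oneV n) = 1 := by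
  rw [lamF_apply, sum_oneV]
  exact inv_mul_cancel₀ (by exact_mod_cast hn)

lemma lamF_of_mem_aug {n : ℕ} {x : Fin n → ℂ} (hx : x ∈ Aug n) : lamF n x = 0 := by
  have : ∑ i, x i = 0 := hx
  rw [lamF_apply, this, mul_zero]

lemma lamF_natRep (n : ℕ) (f : Function.End (Fin n)) (x : Fin n → ℂ) :
    lamF n (natRep n f x) = lamF n x := by
  rw [lamF_apply, lamF_apply, sum_natRep]

lemma wBasis_eq_oneV (n : ℕ) (i : Fin n) (h : ¬ ((i : ℕ) < n - 1)) : wBasis n i = oneV n := by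
  funext k
  simp [wBasis, h, oneV, Finset.sum_apply, Pi.single_apply]

/-- Projection to the augmentation submodule along the all-ones vector. -/
noncomputable def pProj (n : ℕ) : (Fin n → ℂ) →ₗ[ℂ] ↥(Aug n) where
  toFun x := ⟨x - lamF n x • oneV n, by
    show ∑ i, (x i - lamF n x • oneV n i) = 0
    rcases eq_or_ne n 0 with rfl | hn
    · simp
    · simp only [smul_eq_mul, oneV, mul_one, Finset.sum_sub_distrib, Finset.sum_const,
        Finset.card_univ, Fintype.card_fin, nsmul_eq_mul, lamF_apply]
      have hn' : (n : ℂ) ≠ 0 := Nat.cast_ne_zero.2 hn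
      field_simp
      simp⟩
  map_add' x y := by
    apply Subtype.ext
    simp only [map_add, add_smul]
    show x + y - _ = (x - _) + (y - _)
    abel
  map_smul' c x := by
    apply Subtype.ext
    simp only [map_smul, RingHom.id_apply]
    show c • x - (c * lamF n x) • oneV n = c • (x - lamF n x • oneV n)
    rw [smul_sub, mul_smul]

lemma pProj_val (n : ℕ) (x : Fin n → ℂ) :
    (pProj n x : Fin n → ℂ) = x - lamF n x • oneV n := rfl

lemma pProj_of_mem {n : ℕ} {x : Fin n → ℂ} (hx : x ∈ Aug n) : pProj n x = ⟨x, hx⟩ := by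
  apply Subtype.ext
  rw [pProj_val, lamF_of_mem_aug hx, zero_smul, sub_zero]

lemma pProj_comp_subtype (n : ℕ) : (pProj n) ∘ₗ (Aug n).subtype = LinearMap.id := by
  refine LinearMap.ext fun x => ?_
  simpa using pProj_of_mem x.2

lemma lamF_comp_subtype (n : ℕ) : (lamF n) ∘ₗ (Aug n).subtype = 0 := by
  refine LinearMap.ext fun x => ?_
  simpa using lamF_of_mem_aug x.2

lemma lamF_comp_natRep (n : ℕ) (f : Function.End (Fin n)) :
    (lamF n) ∘ₗ (natRep n f : (Fin n → ℂ) →ₗ[ℂ] (Fin n → ℂ)) = lamF n :=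
  LinearMap.ext fun x => lamF_natRep n f x

/-- The sign character of `S_n`, extended by zero to all of `T_n`. -/
noncomputable def sgnExt (n : ℕ) (f : Function.End (Fin n)) : ℂ :=
  @dite _ (Function.Bijective f) (Fintype.decidableBijectiveFintype (f : Fin n → Fin n))
    (fun h => ((Equiv.Perm.sign (Equiv.ofBijective f h) : ℤ) : ℂ)) (fun _ => 0)

set_option synthInstance.maxHeartbeats 1000000 in
set_option maxHeartbeats 2000000 in
/-- Let `w_i = v_i − v_n` (for `i < n`) and `w_n = v_1 + ⋯ + v_n`, a basis of `ℂ^n`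
whose first `n−1` members form a basis of `V = Aug(ℂ^n)`. The linear map
`ρ : Λ^r(ℂ^n) → Λ^{r−1}(V)` defined on the wedge basis by
`ρ(w_{i_1} ∧ ⋯ ∧ w_{i_r}) = w_{i_1} ∧ ⋯ ∧ w_{i_{r−1}}` if `i_r = n` and `0`
otherwise, is a surjective homomorphism of `ℂ[T_n]`-modules (i.e. `T_n`-equivariant)
with kernel `Λ^r(V)` (the image of the inclusion induced by `V ⊆ ℂ^n`). -/
theorem wedge_basis_projection (n r : ℕ) (hr : 1 ≤ r) (hrn : r ≤ n) :
    ∃ ρ : ↥(⋀[ℂ]^r (Fin n → ℂ)) →ₗ[ℂ] ↥(⋀[ℂ]^(r-1) ↥(Aug n)),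
      (∀ idx : Fin r → Fin n, StrictMono idx →
        ρ (wedge r (fun j => wBasis n (idx j))) =
          if ((idx ⟨r - 1, by omega⟩ : Fin n) : ℕ) = n - 1
          then wedge (r-1) (fun j : Fin (r-1) => wAug n (idx ⟨(j : ℕ), by omega⟩))
          else 0) ∧
      Function.Surjective ρ ∧
      LinearMap.ker ρ = LinearMap.range (extMap r (Aug n).subtype) ∧
      (∀ f : Function.End (Fin n),
        ρ.comp (extRep n r f) = (extAugRep n (r-1) f).comp ρ) := by
  classical
  have hn : n ≠ 0 := by omega
  set Dc : ExteriorAlgebra ℂ (Fin n → ℂ) →ₗ[ℂ] ExteriorAlgebra ℂ (Fin n → ℂ) :=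
    (CliffordAlgebra.contractRight (Q := (0 : QuadraticForm ℂ (Fin n → ℂ)))).flip (lamF n)
    with hDc
  set ρhat : ExteriorAlgebra ℂ (Fin n → ℂ) →ₗ[ℂ] ExteriorAlgebra ℂ ↥(Aug n) :=
    (ExteriorAlgebra.map (pProj n)).toLinearMap ∘ₗ Dc with hρhat
  have hval : ∀ x : ExteriorAlgebra ℂ (Fin n → ℂ),
      ρhat x = ExteriorAlgebra.map (pProj n)
        (CliffordAlgebra.contractRight x (lamF n)) := fun _ => rfl
  have hmem : ∀ x ∈ ⋀[ℂ]^r (Fin n → ℂ), ρhat x ∈ ⋀[ℂ]^(r-1) ↥(Aug n) := by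
    intro x hx
    rw [hval]
    exact extAlg_map_mem (r-1) _ (ctr_mem_pow (lamF n) hx).1
  -- the contraction kills the image of the augmentation exterior algebra
  have hctrV : ∀ y : ExteriorAlgebra ℂ ↥(Aug n),
      CliffordAlgebra.contractRight (ExteriorAlgebra.map ((Aug n).subtype) y) (lamF n) = 0 := by
    intro y
    rw [ctr_map, lamF_comp_subtype, ctr_zero_fun, map_zero]
  have hPsub : ∀ y : ExteriorAlgebra ℂ ↥(Aug n),
      ExteriorAlgebra.map (pProj n) (ExteriorAlgebra.map ((Aug n).subtype) y) = y := by
    intro y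
    have h1 : ExteriorAlgebra.map (pProj n) (ExteriorAlgebra.map ((Aug n).subtype) y)
        = ExteriorAlgebra.map ((pProj n) ∘ₗ (Aug n).subtype) y := by
      rw [← ExteriorAlgebra.map_comp_map]
      rfl
    rw [h1, pProj_comp_subtype, ExteriorAlgebra.map_id]
    rfl
  refine ⟨ρhat.restrict (fun x hx => hmem x hx), ?_, ?_, ?_, ?_⟩
  · -- formula on the wedge basis
    intro idx hmono
    obtain ⟨r', rfl⟩ : ∃ r', r = r' + 1 := ⟨r - 1, by omega⟩
    apply Subtype.ext
    rw [LinearMap.restrict_apply]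
    split_ifs with hcase
    · -- last index hits n-1
      have hlast : wBasis n (idx (Fin.last r')) = oneV n := by
        refine wBasis_eq_oneV n _ ?_
        have : ((idx (Fin.last r') : Fin n) : ℕ) = n - 1 := hcase
        omega
      have hu0 : ∀ j : Fin r', lamF n (wBasis n (idx j.castSucc)) = 0 := by
        intro j
        refine lamF_of_mem_aug (wBasis_mem_aug n _ ?_)
        have h1 : idx j.castSucc < idx (Fin.last r') := hmono (Fin.castSucc_lt_last j)
        have h2 : ((idx (Fin.last r') : Fin n) : ℕ) = n - 1 := hcase
        omega
      show ρhat (ExteriorAlgebra.ιMulti ℂ (r'+1) (fun j => wBasis n (idx j))) = _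
      rw [hval, ιMulti_snoc, hlast, CliffordAlgebra.contractRight_mul_ι,
        ctr_ιMulti_zero _ _ hu0, lamF_oneV n hn, one_smul, zero_mul, sub_zero,
        ExteriorAlgebra.map_apply_ιMulti]
      show ExteriorAlgebra.ιMulti ℂ r' (fun j => pProj n (wBasis n (idx j.castSucc)))
        = ExteriorAlgebra.ιMulti ℂ r' (fun j : Fin r' => wAug n (idx ⟨(j : ℕ), by omega⟩))
      congr 1
      funext j
      have hj : ((idx j.castSucc : Fin n) : ℕ) < n - 1 := by
        have h1 : idx j.castSucc < idx (Fin.last r') := hmono (Fin.castSucc_lt_last j)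
        have h2 : ((idx (Fin.last r') : Fin n) : ℕ) = n - 1 := hcase
        omega
      rw [pProj_of_mem (wBasis_mem_aug n _ hj)]
      show _ = wAug n (idx j.castSucc)
      rw [wAug, dif_pos hj]
    · -- all indices below n-1
      have hall : ∀ j : Fin (r'+1), lamF n (wBasis n (idx j)) = 0 := by
        intro j
        refine lamF_of_mem_aug (wBasis_mem_aug n _ ?_)
        have h1 : idx j ≤ idx (Fin.last r') := hmono.monotone (Fin.le_last j)
        have h2 : ((idx (Fin.last r') : Fin n) : ℕ) ≠ n - 1 := hcase
        have h3 : ((idx (Fin.last r') : Fin n) : ℕ) < n := (idx (Fin.last r')).isLt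
        have h4 : ((idx j : Fin n) : ℕ) ≤ ((idx (Fin.last r') : Fin n) : ℕ) := h1
        omega
      show ρhat (ExteriorAlgebra.ιMulti ℂ (r'+1) (fun j => wBasis n (idx j))) = _
      rw [hval, ctr_ιMulti_zero _ _ hall, map_zero]
      rfl
  · -- surjectivity
    intro y
    have hY : ExteriorAlgebra.map ((Aug n).subtype) (y : ExteriorAlgebra ℂ ↥(Aug n))
        ∈ ⋀[ℂ]^(r-1) (Fin n → ℂ) := extAlg_map_mem (r-1) _ y.2
    have hx : ExteriorAlgebra.map ((Aug n).subtype) (y : ExteriorAlgebra ℂ ↥(Aug n))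
        * ExteriorAlgebra.ι ℂ (oneV n) ∈ ⋀[ℂ]^r (Fin n → ℂ) := by
      have hmul := SetLike.mul_mem_graded (A := fun i => ⋀[ℂ]^i (Fin n → ℂ)) hY
        (ι_mem_one (oneV n))
      have he : r - 1 + 1 = r := by omega
      rwa [he] at hmul
    refine ⟨⟨_, hx⟩, ?_⟩
    apply Subtype.ext
    rw [LinearMap.restrict_apply]
    show ρhat _ = _
    rw [hval, CliffordAlgebra.contractRight_mul_ι, hctrV, zero_mul, sub_zero,
      lamF_oneV n hn, one_smul, hPsub]
  · -- kernel
    ext x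
    simp only [LinearMap.mem_ker, LinearMap.mem_range]
    constructor
    · intro hker
      have hker' : ρhat (x : ExteriorAlgebra ℂ (Fin n → ℂ)) = 0 := by
        have := congrArg (Subtype.val) hker
        rwa [LinearMap.restrict_apply] at this
      have hq : ∀ a : Fin n → ℂ,
          (((Aug n).subtype ∘ₗ pProj n) a) = a - lamF n a • oneV n := fun a => rfl
      have hE := map_proj_id ((Aug n).subtype ∘ₗ pProj n) (lamF n) (oneV n) hq
        (x : ExteriorAlgebra ℂ (Fin n → ℂ))
      have hcomp : ∀ w : ExteriorAlgebra ℂ (Fin n → ℂ),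
          ExteriorAlgebra.map ((Aug n).subtype ∘ₗ pProj n) w
            = ExteriorAlgebra.map ((Aug n).subtype) (ExteriorAlgebra.map (pProj n) w) := by
        intro w
        rw [← ExteriorAlgebra.map_comp_map]
        rfl
      rw [hcomp, hcomp, ← hval, hker', map_zero, zero_mul, add_zero] at hE
      refine ⟨⟨ExteriorAlgebra.map (pProj n) (x : ExteriorAlgebra ℂ (Fin n → ℂ)),
        extAlg_map_mem r _ x.2⟩, ?_⟩
      apply Subtype.ext
      show ExteriorAlgebra.map ((Aug n).subtype) (ExteriorAlgebra.map (pProj n) (x : ExteriorAlgebra ℂ (Fin n → ℂ))) = _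
      exact hE
    · rintro ⟨y, rfl⟩
      apply Subtype.ext
      rw [LinearMap.restrict_apply]
      show ρhat _ = (0 : ↥(⋀[ℂ]^(r-1) ↥(Aug n))).val
      rw [hval]
      show ExteriorAlgebra.map (pProj n) (CliffordAlgebra.contractRight
        (ExteriorAlgebra.map ((Aug n).subtype) (y : ExteriorAlgebra ℂ ↥(Aug n))) (lamF n)) = _
      rw [hctrV, map_zero]
      rfl
  · -- equivariance
    intro f
    have hfl : (lamF n) ∘ₗ (natRep n f : (Fin n → ℂ) →ₗ[ℂ] (Fin n → ℂ)) = lamF n :=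
      lamF_comp_natRep n f
    have hzmem : natRep n f (oneV n) - oneV n ∈ Aug n := by
      show ∑ i, (natRep n f (oneV n) i - oneV n i) = 0
      rw [Finset.sum_sub_distrib, sum_natRep, sub_self]
    set zf : ↥(Aug n) := ⟨natRep n f (oneV n) - oneV n, hzmem⟩ with hzf
    have hg : ∀ a : Fin n → ℂ,
        ((pProj n) ∘ₗ (natRep n f : (Fin n → ℂ) →ₗ[ℂ] (Fin n → ℂ))) a
          = ((augRep n f : ↥(Aug n) →ₗ[ℂ] ↥(Aug n)) ∘ₗ (pProj n)) a + lamF n a • zf := by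
      intro a
      apply Subtype.ext
      show (pProj n (natRep n f a) : Fin n → ℂ)
        = ((augRep n f (pProj n a) : ↥(Aug n)) : Fin n → ℂ) + lamF n a • (zf : Fin n → ℂ)
      have h1 : ((augRep n f (pProj n a) : ↥(Aug n)) : Fin n → ℂ)
          = natRep n f ((pProj n a : Fin n → ℂ)) := rfl
      rw [pProj_val, h1, pProj_val, lamF_natRep, map_sub, map_smul]
      show natRep n f a - lamF n a • oneV n
        = natRep n f a - lamF n a • natRep n f (oneV n)
          + lamF n a • (natRep n f (oneV n) - oneV n)
      rw [smul_sub]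
      abel
    apply LinearMap.ext
    intro x
    apply Subtype.ext
    rw [LinearMap.comp_apply, LinearMap.comp_apply]
    have hL : ((extRep n r f) x : ExteriorAlgebra ℂ (Fin n → ℂ))
        = ExteriorAlgebra.map (natRep n f) (x : ExteriorAlgebra ℂ (Fin n → ℂ)) := rfl
    have hR : ∀ w : ↥(⋀[ℂ]^(r-1) ↥(Aug n)),
        (((extAugRep n (r-1) f) w : ExteriorAlgebra ℂ ↥(Aug n)))
          = ExteriorAlgebra.map (augRep n f) (w : ExteriorAlgebra ℂ ↥(Aug n)) := fun _ => rfl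
    rw [LinearMap.restrict_apply, LinearMap.restrict_apply]
    show ρhat ((extRep n r f) x : ExteriorAlgebra ℂ (Fin n → ℂ))
      = ExteriorAlgebra.map (augRep n f) (ρhat (x : ExteriorAlgebra ℂ (Fin n → ℂ)))
    rw [hL, hval, hval, ctr_map, hfl]
    have hc1 : ExteriorAlgebra.map (pProj n) (ExteriorAlgebra.map (natRep n f)
        (CliffordAlgebra.contractRight (x : ExteriorAlgebra ℂ (Fin n → ℂ)) (lamF n)))
        = ExteriorAlgebra.map ((pProj n) ∘ₗ (natRep n f : (Fin n → ℂ) →ₗ[ℂ] (Fin n → ℂ)))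
          (CliffordAlgebra.contractRight (x : ExteriorAlgebra ℂ (Fin n → ℂ)) (lamF n)) := by
      rw [← ExteriorAlgebra.map_comp_map]
      rfl
    have hc2 : ExteriorAlgebra.map (augRep n f) (ExteriorAlgebra.map (pProj n)
        (CliffordAlgebra.contractRight (x : ExteriorAlgebra ℂ (Fin n → ℂ)) (lamF n)))
        = ExteriorAlgebra.map ((augRep n f : ↥(Aug n) →ₗ[ℂ] ↥(Aug n)) ∘ₗ (pProj n))
          (CliffordAlgebra.contractRight (x : ExteriorAlgebra ℂ (Fin n → ℂ)) (lamF n)) := by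
      rw [← ExteriorAlgebra.map_comp_map]
      rfl
    rw [hc1, hc2]
    exact map_ctr_eq_map_ctr _ _ (lamF n) zf hg _
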